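/- Fix a > 0. The function g(λ) = ψ₀(a+λ) − ψ₀(λ) is strictly decreasing on (0,∞), satisfies g(λ) → +∞ as λ → 0⁺ and g(λ) → 0 as λ → ∞, and hence is a bijection from (0,∞) onto (0,∞). In particular, for every t > 0 there exists a unique λ > 0 with ψ₀(a+λ) − ψ₀(λ) = t. -/

import Mathlib

open Filter

/-- The polygamma function `ψₙ`: the `(n+1)`-st derivative of `log ∘ Γ`. -/
noncomputable def polygamma (n : ℕ) (x : ℝ) : ℝ :=
  iteratedDeriv (n + 1) (fun y => Real.log (Real.Gamma y)) x


open Filter Set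

namespace PolygammaAux

/-- digamma -/
noncomputable def psi (x : ℝ) : ℝ := deriv (fun y => Real.log (Real.Gamma y)) x

lemma contDiffAt_Gamma {x : ℝ} (hx : 0 < x) : ContDiffAt ℝ 2 Real.Gamma x := by
  have h1 : AnalyticAt ℂ Complex.Gamma (x : ℂ) := by
    have hopen : IsOpen {s : ℂ | 0 < s.re} := isOpen_lt continuous_const Complex.continuous_re
    have hd : DifferentiableOn ℂ Complex.Gamma {s : ℂ | 0 < s.re} := by
      intro s hs
      refine (Complex.differentiableAt_Gamma s fun m => ?_).differentiableWithinAt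
      intro h
      rw [h] at hs
      simp only [Set.mem_setOf_eq, Complex.neg_re, Complex.natCast_re] at hs
      have : (0:ℝ) ≤ m := Nat.cast_nonneg m
      linarith
    exact hd.analyticAt (hopen.mem_nhds (by simpa using hx))
  have h2 : ContDiffAt ℝ 2 (fun y : ℝ => (Complex.Gamma (y : ℂ)).re) x := by
    exact Complex.reCLM.contDiff.contDiffAt.comp _
      ((h1.contDiffAt.restrict_scalars ℝ).comp x Complex.ofRealCLM.contDiff.contDiffAt)
  refine h2.congr_of_eventuallyEq (Eventually.of_forall fun y => ?_)
  show Real.Gamma y = (Complex.Gamma (y:ℂ)).re; rw [Complex.Gamma_ofReal, Complex.ofReal_re]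

lemma contDiffAt_logGamma {x : ℝ} (hx : 0 < x) :
    ContDiffAt ℝ 2 (fun y => Real.log (Real.Gamma y)) x :=
  (contDiffAt_Gamma hx).log (Real.Gamma_pos_of_pos hx).ne'

lemma hasDerivAt_psi {x : ℝ} (hx : 0 < x) :
    HasDerivAt (fun y => Real.log (Real.Gamma y)) (psi x) x :=
  ((contDiffAt_logGamma hx).differentiableAt (by norm_num)).hasDerivAt

lemma continuousOn_psi : ContinuousOn psi (Ioi 0) := by
  have h : ContDiffOn ℝ 2 (fun y => Real.log (Real.Gamma y)) (Ioi 0) :=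
    fun x hx => (contDiffAt_logGamma hx).contDiffWithinAt
  exact h.continuousOn_deriv_of_isOpen isOpen_Ioi (by norm_num)

lemma psi_add_one {x : ℝ} (hx : 0 < x) : psi (x + 1) = psi x + 1 / x := by
  have h1 : HasDerivAt (fun y : ℝ => Real.log (Real.Gamma (y + 1))) (psi (x + 1)) x := by
    simpa [Function.comp_def] using (hasDerivAt_psi (by linarith : (0:ℝ) < x + 1)).comp x
      ((hasDerivAt_id x).add_const 1)
  have h2 : (fun y : ℝ => Real.log y + Real.log (Real.Gamma y)) =ᶠ[nhds x]
      (fun y : ℝ => Real.log (Real.Gamma (y + 1))) := by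
    filter_upwards [isOpen_Ioi.mem_nhds (show x ∈ Ioi 0 from hx)] with y hy
    rw [Real.Gamma_add_one (ne_of_gt hy),
      Real.log_mul (ne_of_gt hy) (Real.Gamma_pos_of_pos hy).ne']
  have h3 : HasDerivAt (fun y : ℝ => Real.log y + Real.log (Real.Gamma y))
      (psi (x + 1)) x := h1.congr_of_eventuallyEq h2
  have h4 : HasDerivAt (fun y : ℝ => Real.log y + Real.log (Real.Gamma y))
      (1 / x + psi x) x := by
    simpa [one_div, Pi.add_def] using (Real.hasDerivAt_log (ne_of_gt hx)).add (hasDerivAt_psi hx)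
  have := h3.unique h4
  linarith

lemma psi_add_nat {x : ℝ} (hx : 0 < x) (N : ℕ) :
    psi (x + N) = psi x + ∑ k ∈ Finset.range N, 1 / (x + k) := by
  induction N with
  | zero => simp
  | succ n ih =>
    have hxn : 0 < x + n := by positivity
    have : psi (x + (n + 1 : ℕ)) = psi ((x + n) + 1) := by push_cast; ring_nf
    rw [this, psi_add_one hxn, ih, Finset.sum_range_succ]; ring

lemma monotoneOn_psi : MonotoneOn psi (Ioi 0) := by
  have := Real.convexOn_log_Gamma.monotoneOn_deriv
    (fun x hx => (contDiffAt_logGamma hx).differentiableAt (by norm_num))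
  exact this

lemma psi_le_psi {x y : ℝ} (hx : 0 < x) (hxy : x ≤ y) : psi x ≤ psi y :=
  monotoneOn_psi hx (lt_of_lt_of_le hx hxy) hxy

/-- upper bound on digamma increment -/
lemma psi_diff_le {x b : ℝ} (hx : 0 < x) (hb : 0 < b) :
    psi (x + b) - psi x ≤ (⌈b⌉₊ : ℝ) / x := by
  set m : ℕ := ⌈b⌉₊ with hm
  have hbm : b ≤ m := Nat.le_ceil b
  have h1 : psi (x + b) ≤ psi (x + m) := psi_le_psi (by positivity) (by linarith)
  have h2 : psi (x + m) = psi x + ∑ k ∈ Finset.range m, 1 / (x + k) := psi_add_nat hx m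
  have h3 : ∑ k ∈ Finset.range m, 1 / (x + k) ≤ (m : ℝ) / x := by
    calc ∑ k ∈ Finset.range m, 1 / (x + k) ≤ ∑ k ∈ Finset.range m, 1 / x := by
          refine Finset.sum_le_sum fun k _ => ?_
          have : (0:ℝ) ≤ k := Nat.cast_nonneg k
          rw [div_le_div_iff₀ (by positivity) hx]
          linarith
      _ = (m : ℝ) / x := by rw [Finset.sum_const, Finset.card_range]; ring
  linarith

lemma psi_diff_nonneg {x b : ℝ} (hx : 0 < x) (hb : 0 ≤ b) :
    0 ≤ psi (x + b) - psi x := by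
  have := psi_le_psi hx (by linarith : x ≤ x + b)
  linarith

/-- key telescoping identity -/
lemma key_identity {x a : ℝ} (hx : 0 < x) (ha : 0 < a) (N : ℕ) :
    psi (x + a) - psi x =
      (∑ k ∈ Finset.range N, (1 / (x + k) - 1 / (x + a + k))) +
        (psi (x + a + N) - psi (x + N)) := by
  have h1 : psi (x + a + N) = psi (x + a) + ∑ k ∈ Finset.range N, 1 / (x + a + k) :=
    psi_add_nat (by positivity) N
  have h2 : psi (x + N) = psi x + ∑ k ∈ Finset.range N, 1 / (x + k) :=
    psi_add_nat hx N
  rw [Finset.sum_sub_distrib]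
  linarith

end PolygammaAux

open PolygammaAux in
theorem lambda_t_duality' (a : ℝ) (ha : 0 < a) :
    StrictAntiOn (fun lam => psi (a + lam) - psi lam) (Set.Ioi 0) ∧
    Tendsto (fun lam => psi (a + lam) - psi lam)
      (nhdsWithin 0 (Set.Ioi 0)) atTop ∧
    Tendsto (fun lam => psi (a + lam) - psi lam) atTop (nhds 0) ∧
    Set.BijOn (fun lam => psi (a + lam) - psi lam)
      (Set.Ioi 0) (Set.Ioi 0) ∧
    ∀ t : ℝ, 0 < t → ∃! lam : ℝ, 0 < lam ∧ psi (a + lam) - psi lam = t := by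
  set g : ℝ → ℝ := fun lam => psi (a + lam) - psi lam with hg
  have hg' : ∀ l : ℝ, g l = psi (l + a) - psi l := fun l => by
    simp [hg, add_comm]
  have key : ∀ l : ℝ, 0 < l → 1 / l - 1 / (l + a) = a / (l * (l + a)) := by
    intro l hl
    field_simp
    ring
  have hterm : ∀ (k : ℕ) {l1 l2 : ℝ}, 0 < l1 → l1 ≤ l2 →
      1 / (l2 + k) - 1 / (l2 + a + k) ≤ 1 / (l1 + k) - 1 / (l1 + a + k) := by
    intro k l1 l2 h1 h12
    have hk : (0:ℝ) ≤ k := Nat.cast_nonneg k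
    have e1 : l1 + a + k = (l1 + k) + a := by ring
    have e2 : l2 + a + k = (l2 + k) + a := by ring
    rw [e1, e2, key _ (by linarith), key _ (by linarith)]
    gcongr <;> linarith
  -- strict antitonicity
  have hanti : StrictAntiOn g (Set.Ioi 0) := by
    intro l1 h1 l2 h2 hlt
    simp only [Set.mem_Ioi] at h1 h2
    set δ : ℝ := (1 / l1 - 1 / (l1 + a)) - (1 / l2 - 1 / (l2 + a)) with hδ
    have hδpos : 0 < δ := by
      have h' : a / (l2 * (l2 + a)) < a / (l1 * (l1 + a)) :=
        div_lt_div_of_pos_left ha (mul_pos h1 (by linarith)) (by nlinarith)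
      rw [hδ, key _ h1, key _ h2]
      linarith
    obtain ⟨N, hN⟩ := exists_nat_gt ((⌈a⌉₊ : ℝ) / δ)
    have hCpos : (0:ℝ) < ⌈a⌉₊ := by
      have : 0 < ⌈a⌉₊ := Nat.ceil_pos.mpr ha
      exact_mod_cast this
    have hN0 : 0 < N := by
      by_contra h
      push_neg at h
      interval_cases N
      simp only [Nat.cast_zero] at hN
      have : (0:ℝ) < (⌈a⌉₊ : ℝ) / δ := by positivity
      linarith
    have hb1 := key_identity h1 ha N
    have hb2 := key_identity h2 ha N
    have hE1 : 0 ≤ psi (l1 + a + N) - psi (l1 + N) := by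
      have e : l1 + a + N = (l1 + N) + a := by ring
      rw [e]
      exact psi_diff_nonneg (by positivity) ha.le
    have hE2 : psi (l2 + a + N) - psi (l2 + N) ≤ (⌈a⌉₊ : ℝ) / (l2 + N) := by
      have e : l2 + a + N = (l2 + N) + a := by ring
      rw [e]
      exact psi_diff_le (by positivity) ha
    have hsum : δ ≤ ∑ k ∈ Finset.range N,
        ((1 / (l1 + k) - 1 / (l1 + a + k)) - (1 / (l2 + k) - 1 / (l2 + a + k))) := by
      have := Finset.single_le_sum
        (f := fun k : ℕ => (1 / (l1 + k) - 1 / (l1 + a + k)) - (1 / (l2 + k) - 1 / (l2 + a + k)))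
        (fun k _ => sub_nonneg.mpr (hterm k h1 hlt.le)) (Finset.mem_range.mpr hN0)
      simpa [hδ] using this
    have hsplit : ∑ k ∈ Finset.range N,
        ((1 / (l1 + k) - 1 / (l1 + a + k)) - (1 / (l2 + k) - 1 / (l2 + a + k)))
        = (∑ k ∈ Finset.range N, (1 / (l1 + k) - 1 / (l1 + a + k)))
          - ∑ k ∈ Finset.range N, (1 / (l2 + k) - 1 / (l2 + a + k)) :=
      Finset.sum_sub_distrib _ _
    have hfrac : (⌈a⌉₊ : ℝ) / (l2 + N) < δ := by
      rw [div_lt_iff₀ (by positivity)]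
      have hNδ : (⌈a⌉₊ : ℝ) < δ * N := by
        rw [div_lt_iff₀ hδpos] at hN
        linarith
      nlinarith
    rw [hg' l1, hg' l2]
    linarith [hb1, hb2]
  -- tendsto at 0⁺
  have htend0 : Tendsto g (nhdsWithin 0 (Set.Ioi 0)) atTop := by
    have h4 : Tendsto (fun l : ℝ => 1 / l + (psi a - psi 2)) (nhdsWithin 0 (Set.Ioi 0)) atTop := by
      apply tendsto_atTop_add_const_right
      exact tendsto_inv_nhdsGT_zero.congr fun l => (one_div l).symm
    refine tendsto_atTop_mono' _ ?_ h4
    filter_upwards [Ioo_mem_nhdsGT_of_mem (show (0:ℝ) ∈ Set.Ico (0:ℝ) 1 by constructor <;> norm_num)]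
      with l hl
    have hl0 : 0 < l := hl.1
    have h1 : psi a ≤ psi (a + l) := psi_le_psi ha (by linarith)
    have h2 : psi (l + 1) ≤ psi 2 := psi_le_psi (by linarith) (by linarith [hl.2])
    have h3 : psi (l + 1) = psi l + 1 / l := psi_add_one hl0
    simp only [hg]
    linarith
  -- tendsto at ∞
  have htendinf : Tendsto g atTop (nhds 0) := by
    have hub : ∀ᶠ l : ℝ in atTop, g l ≤ (⌈a⌉₊ : ℝ) / l := by
      filter_upwards [eventually_gt_atTop (0:ℝ)] with l hl
      rw [hg' l]
      exact psi_diff_le hl ha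
    have hlb : ∀ᶠ l : ℝ in atTop, 0 ≤ g l := by
      filter_upwards [eventually_gt_atTop (0:ℝ)] with l hl
      rw [hg' l]
      exact psi_diff_nonneg hl ha.le
    have hdiv : Tendsto (fun l : ℝ => (⌈a⌉₊ : ℝ) / l) atTop (nhds 0) :=
      tendsto_const_nhds.div_atTop tendsto_id
    exact squeeze_zero' hlb hub hdiv
  -- positivity
  have hpos : ∀ l ∈ Set.Ioi (0:ℝ), 0 < g l := by
    intro l hl
    simp only [Set.mem_Ioi] at hl
    have hid := key_identity hl ha 1
    rw [Finset.sum_range_one] at hid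
    push_cast [add_zero] at hid
    have hE : 0 ≤ psi (l + a + 1) - psi (l + 1) := by
      have e : l + a + 1 = (l + 1) + a := by ring
      rw [e]
      exact psi_diff_nonneg (by linarith) ha.le
    have hfirst : 0 < 1 / l - 1 / (l + a) := by
      rw [key l hl]
      positivity
    rw [hg' l]
    linarith
  -- continuity
  have hcont : ContinuousOn g (Set.Ioi 0) := by
    apply ContinuousOn.sub
    · exact continuousOn_psi.comp (continuous_const.add continuous_id).continuousOn
        (fun l hl => Set.mem_Ioi.mpr (by have := Set.mem_Ioi.mp hl; linarith))
    · exact continuousOn_psi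
  -- surjectivity
  have hsurj : Set.SurjOn g (Set.Ioi 0) (Set.Ioi 0) := by
    intro t ht
    have ht' : 0 < t := ht
    obtain ⟨l1, hl1ge, hl1mem⟩ := ((htend0.eventually_ge_atTop t).and self_mem_nhdsWithin).exists
    have hl1pos : (0:ℝ) < l1 := hl1mem
    obtain ⟨l2, hl2lt, hl2ge⟩ :=
      ((htendinf.eventually_lt_const ht').and (eventually_ge_atTop l1)).exists
    have hsub : Set.Icc l1 l2 ⊆ Set.Ioi 0 := fun x hx => lt_of_lt_of_le hl1pos hx.1
    have := intermediate_value_Icc' hl2ge (hcont.mono hsub)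
    obtain ⟨l, hlmem, hgl⟩ := this ⟨hl2lt.le, hl1ge⟩
    exact ⟨l, hsub hlmem, hgl⟩
  have hbij : Set.BijOn g (Set.Ioi 0) (Set.Ioi 0) :=
    ⟨fun l hl => Set.mem_Ioi.mpr (hpos l hl), hanti.injOn, hsurj⟩
  refine ⟨hanti, htend0, htendinf, hbij, ?_⟩
  intro t ht
  obtain ⟨l, hl, hgl⟩ := hsurj (Set.mem_Ioi.mpr ht)
  refine ⟨l, ⟨hl, hgl⟩, ?_⟩
  rintro y ⟨hy, hgy⟩
  exact hanti.injOn (Set.mem_Ioi.mpr hy) hl (hgy.trans hgl.symm)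


lemma polygamma_zero_eq_psi (x : ℝ) : polygamma 0 x = PolygammaAux.psi x := by
  simp [polygamma, PolygammaAux.psi, iteratedDeriv_one]

/-- Lemma `lam-xi-t`(b): for fixed `a > 0` the function `g(λ) = ψ₀(a+λ) − ψ₀(λ)` is
strictly decreasing on `(0,∞)`, tends to `+∞` at `0⁺` and to `0` at `∞`, and is a
bijection from `(0,∞)` onto `(0,∞)`; in particular for every `t > 0` there is a unique
`λ > 0` with `ψ₀(a+λ) − ψ₀(λ) = t`. -/
theorem lambda_t_duality (a : ℝ) (ha : 0 < a) :
    StrictAntiOn (fun lam => polygamma 0 (a + lam) - polygamma 0 lam) (Set.Ioi 0) ∧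
    Tendsto (fun lam => polygamma 0 (a + lam) - polygamma 0 lam)
      (nhdsWithin 0 (Set.Ioi 0)) atTop ∧
    Tendsto (fun lam => polygamma 0 (a + lam) - polygamma 0 lam) atTop (nhds 0) ∧
    Set.BijOn (fun lam => polygamma 0 (a + lam) - polygamma 0 lam)
      (Set.Ioi 0) (Set.Ioi 0) ∧
    ∀ t : ℝ, 0 < t → ∃! lam : ℝ, 0 < lam ∧ polygamma 0 (a + lam) - polygamma 0 lam = t := by
  simp only [polygamma_zero_eq_psi]
  exact lambda_t_duality' a ha
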